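/- arXiv:1108.4623 — 4 statements merged into one kernel-verified Lean document; each statement's English description precedes it below -/
import Mathlib

section
/- Let d ≥ 2, K ≥ 1, M ≥ 0, and let {P_m} be a sequence of polynomials P_m(z) = a_{d_m,m} z^{d_m} + ... + a_{0,m} with 2 ≤ d_m ≤ d, 1/K ≤ |a_{d_m,m}| ≤ K, and |a_{n,m}| ≤ M for n < d_m. Then there exists R > 0, depending only on d, K, M, such that for every m ≥ 0 and every z with |z| > R, the iterates Q_{m,n}(z) = P_n ∘ ... ∘ P_{m+1}(z) satisfy |Q_{m,n}(z)| → ∞ as n → ∞. -/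
open Filter Polynomial

/-- existence of an escape radius depending only on the bounds d, K, M. -/
theorem escape_radius_exists (d : ℕ) (K M : ℝ) (hd : 2 ≤ d) (hK : 1 ≤ K) (hM : 0 ≤ M) :
    ∃ R : ℝ, 0 < R ∧
      ∀ (P : ℕ → Polynomial ℂ) (dm : ℕ → ℕ),
        (∀ m, (P m).natDegree = dm m) →
        (∀ m, 2 ≤ dm m ∧ dm m ≤ d) →
        (∀ m, 1 / K ≤ ‖(P m).leadingCoeff‖ ∧ ‖(P m).leadingCoeff‖ ≤ K) →
        (∀ m n, n < dm m → ‖(P m).coeff n‖ ≤ M) →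
        ∀ (Q : ℕ → ℕ → ℂ → ℂ),
          (∀ m z, Q m m z = z) →
          (∀ m n z, Q m (n + 1) z = (P (n + 1)).eval (Q m n z)) →
          ∀ m (z : ℂ), R < ‖z‖ →
            Tendsto (fun n => ‖Q m n z‖) atTop atTop := by
  have hK0 : (0:ℝ) < K := lt_of_lt_of_le one_pos hK
  refine ⟨K * (d * M + 2), by positivity, ?_⟩
  intro P dm hdeg hdm hlead hcoeff Q hQ0 hQrec m z hz
  set R : ℝ := K * (d * M + 2) with hR
  have hdR : (↑d : ℝ) * M + 2 ≥ 2 := by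
    have : (0:ℝ) ≤ (d:ℝ) * M := by positivity
    linarith
  have hR2 : (2:ℝ) ≤ R := by nlinarith
  -- key bound
  have key : ∀ n (w : ℂ), R < ‖w‖ →
      2 * ‖w‖ ≤ ‖(P n).eval w‖ := by
    intro n w hw
    have hw1 : (1:ℝ) ≤ ‖w‖ := by linarith
    set D := dm n with hD
    have hD2 : 2 ≤ D := (hdm n).1
    have hDd : D ≤ d := (hdm n).2
    have hdegn : (P n).natDegree = D := hdeg n
    have heval : (P n).eval w =
        (∑ i ∈ Finset.range D, (P n).coeff i * w ^ i) + (P n).leadingCoeff * w ^ D := by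
      rw [Polynomial.eval_eq_sum_range, hdegn, Finset.sum_range_succ,
        Polynomial.leadingCoeff, hdegn]
    -- bound on small terms
    have hsmall : ‖∑ i ∈ Finset.range D, (P n).coeff i * w ^ i‖ ≤
        (d : ℝ) * M * ‖w‖ ^ (D - 1) := by
      calc ‖∑ i ∈ Finset.range D, (P n).coeff i * w ^ i‖
          ≤ ∑ i ∈ Finset.range D, ‖(P n).coeff i * w ^ i‖ := by
            exact norm_sum_le _ _
        _ ≤ ∑ i ∈ Finset.range D, M * ‖w‖ ^ (D - 1) := by
            apply Finset.sum_le_sum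
            intro i hi
            rw [norm_mul, norm_pow]
            have h1 : ‖(P n).coeff i‖ ≤ M := hcoeff n i (Finset.mem_range.mp hi)
            have h2 : ‖w‖ ^ i ≤ ‖w‖ ^ (D - 1) :=
              pow_le_pow_right₀ hw1 (Nat.le_sub_one_of_lt (Finset.mem_range.mp hi))
            exact mul_le_mul h1 h2 (by positivity) hM
        _ = (D : ℝ) * M * ‖w‖ ^ (D - 1) := by
            rw [Finset.sum_const, Finset.card_range]; ring
        _ ≤ (d : ℝ) * M * ‖w‖ ^ (D - 1) := by
            gcongr <;> exact_mod_cast hDd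
    -- bound on leading term
    have hlarge : (1 / K) * (‖w‖ ^ (D - 1) * ‖w‖) ≤
        ‖(P n).leadingCoeff * w ^ D‖ := by
      rw [norm_mul, norm_pow]
      have hDsplit : ‖w‖ ^ D = ‖w‖ ^ (D - 1) * ‖w‖ := by
        rw [← pow_succ]
        congr 1
        omega
      rw [hDsplit]
      exact mul_le_mul_of_nonneg_right (hlead n).1 (by positivity)
    have htri : ‖(P n).leadingCoeff * w ^ D‖ -
        ‖∑ i ∈ Finset.range D, (P n).coeff i * w ^ i‖ ≤
        ‖(P n).eval w‖ := by
      have h := norm_sub_le ((∑ i ∈ Finset.range D, (P n).coeff i * w ^ i) +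
        (P n).leadingCoeff * w ^ D) (∑ i ∈ Finset.range D, (P n).coeff i * w ^ i)
      rw [add_sub_cancel_left] at h
      rw [heval]
      linarith
    have hpow1 : ‖w‖ ≤ ‖w‖ ^ (D - 1) := by
      calc ‖w‖ = ‖w‖ ^ 1 := (pow_one _).symm
        _ ≤ ‖w‖ ^ (D - 1) := pow_le_pow_right₀ hw1 (by omega)
    have hwK : (↑d : ℝ) * M + 2 ≤ (1 / K) * ‖w‖ := by
      rw [div_mul_eq_mul_div, le_div_iff₀ hK0]
      nlinarith
    have hpos : (0:ℝ) ≤ ‖w‖ ^ (D - 1) := by positivity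
    nlinarith [mul_le_mul_of_nonneg_left hwK hpos]
  -- induction along iterates
  have main : ∀ k, R < ‖Q m (m + k) z‖ ∧
      (2:ℝ) ^ k * ‖z‖ ≤ ‖Q m (m + k) z‖ := by
    intro k
    induction k with
    | zero => simpa [hQ0] using hz
    | succ k ih =>
      obtain ⟨ih1, ih2⟩ := ih
      have hrec : Q m (m + (k + 1)) z = (P (m + k + 1)).eval (Q m (m + k) z) := by
        rw [show m + (k + 1) = (m + k) + 1 by ring, hQrec]
      have hkey := key (m + k + 1) _ ih1
      constructor
      · rw [hrec]; nlinarith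
      · rw [hrec]
        calc (2:ℝ) ^ (k + 1) * ‖z‖ = 2 * ((2:ℝ) ^ k * ‖z‖) := by ring
          _ ≤ 2 * ‖Q m (m + k) z‖ := by nlinarith
          _ ≤ _ := hkey
  -- conclude tendsto
  have hz0 : (0:ℝ) < ‖z‖ := by linarith [hR2, hz, show (0:ℝ) < R by positivity]
  have hbase : Tendsto (fun n : ℕ => (2:ℝ) ^ (n - m) * ‖z‖) atTop atTop := by
    apply Tendsto.atTop_mul_const hz0
    exact (tendsto_pow_atTop_atTop_of_one_lt (by norm_num : (1:ℝ) < 2)).comp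
      (tendsto_sub_atTop_nat m)
  apply tendsto_atTop_mono' _ _ hbase
  filter_upwards [eventually_ge_atTop m] with n hn
  have := (main (n - m)).2
  rwa [Nat.add_sub_cancel' hn] at this
end

section
/- Let {P_m} be a sequence of monic polynomials with degrees d_m ∈ [2, d] and non-leading coefficients bounded by M. Let R_0 be such that for all R ≥ R_0 and 2 ≤ d' ≤ d, R^{d'} ≥ 2M ∑_{i=0}^{d'-1} R^i, and assume R_0^2/2 ≥ R_0. Then for every m ≤ n and every z with |z| = R ≥ R_0, writing D_{m,n} = ∏_{i=m+1}^n d_i, one has (1/2)^{1 + ∑_{i=m+1}^n D_{i,n}} R^{D_{m,n}} ≤ |Q_{m,n}(z)| ≤ (3/2)^{1 + ∑_{i=m+1}^n D_{i,n}} R^{D_{m,n}}. -/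
open Polynomial Finset

/-- growth estimates for compositions of a bounded monic polynomial sequence. -/
theorem composition_circle_estimate (d : ℕ) (M : ℝ) (hd : 2 ≤ d) (hM : 0 ≤ M)
    (P : ℕ → Polynomial ℂ) (dm : ℕ → ℕ)
    (hmonic : ∀ m, (P m).Monic) (hdeg : ∀ m, (P m).natDegree = dm m)
    (hdm : ∀ m, 2 ≤ dm m ∧ dm m ≤ d)
    (hcoeff : ∀ m, ∀ i < dm m, ‖(P m).coeff i‖ ≤ M)
    (R₀ : ℝ) (hR₀ : 0 < R₀)
    (hR₀dom : ∀ R : ℝ, R₀ ≤ R → ∀ d' : ℕ, 2 ≤ d' → d' ≤ d →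
      2 * M * ∑ i ∈ range d', R ^ i ≤ R ^ d')
    (hR₀sq : R₀ ≤ R₀ ^ 2 / 2)
    (Q : ℕ → ℕ → ℂ → ℂ)
    (hQ0 : ∀ m z, Q m m z = z)
    (hQs : ∀ m n z, Q m (n + 1) z = (P (n + 1)).eval (Q m n z))
    (D : ℕ → ℕ → ℕ) (hD : ∀ m n, D m n = ∏ i ∈ Finset.Icc (m + 1) n, dm i)
    (m n : ℕ) (hmn : m ≤ n) (R : ℝ) (hR : R₀ ≤ R) (z : ℂ) (hz : ‖z‖ = R) :
    (1 / 2 : ℝ) ^ (1 + ∑ i ∈ Finset.Icc (m + 1) n, D i n) * R ^ D m n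
      ≤ ‖Q m n z‖ ∧
    ‖Q m n z‖
      ≤ (3 / 2 : ℝ) ^ (1 + ∑ i ∈ Finset.Icc (m + 1) n, D i n) * R ^ D m n := by
  have h2R₀ : (2 : ℝ) ≤ R₀ := by nlinarith
  have h2R : (2 : ℝ) ≤ R := le_trans h2R₀ hR
  have hR0 : (0 : ℝ) < R := by linarith
  -- Pointwise key lemma
  have key : ∀ k (w : ℂ), R₀ ≤ ‖w‖ →
      (1 / 2 : ℝ) * ‖w‖ ^ dm k ≤ ‖(P k).eval w‖ ∧
      ‖(P k).eval w‖ ≤ (3 / 2 : ℝ) * ‖w‖ ^ dm k := by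
    intro k w hw
    have hw0 : (0 : ℝ) < ‖w‖ := lt_of_lt_of_le hR₀ hw
    have hd2 := (hdm k).1
    have hlead : (P k).coeff (dm k) = 1 := by
      rw [← hdeg k]; exact (hmonic k).coeff_natDegree
    have heval : (P k).eval w = w ^ dm k + ∑ i ∈ range (dm k), (P k).coeff i * w ^ i := by
      have h1 := Polynomial.eval_eq_sum_range (p := P k) w
      rw [hdeg k, Finset.sum_range_succ, hlead, one_mul, add_comm] at h1
      exact h1
    set e : ℂ := ∑ i ∈ range (dm k), (P k).coeff i * w ^ i with he
    have herr : ‖e‖ ≤ (1 / 2 : ℝ) * ‖w‖ ^ dm k := by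
      have h1 : ‖e‖ ≤ ∑ i ∈ range (dm k), M * ‖w‖ ^ i := by
        refine le_trans (norm_sum_le _ _) (Finset.sum_le_sum ?_)
        intro i hi
        rw [norm_mul, norm_pow]
        exact mul_le_mul_of_nonneg_right (hcoeff k i (Finset.mem_range.mp hi))
          (pow_nonneg hw0.le i)
      have h2 := hR₀dom (‖w‖) hw (dm k) hd2 (hdm k).2
      rw [← Finset.mul_sum] at h1
      linarith
    constructor
    · have t1 : ‖w‖ ^ dm k ≤ ‖(P k).eval w‖ + ‖e‖ := by
        have hrep : w ^ dm k = (P k).eval w + (-e) := by rw [heval]; ring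
        have h := norm_add_le ((P k).eval w) (-e)
        rw [norm_neg] at h
        calc ‖w‖ ^ dm k = ‖w ^ dm k‖ := (norm_pow _ _).symm
          _ = ‖(P k).eval w + (-e)‖ := by rw [hrep]
          _ ≤ ‖(P k).eval w‖ + ‖e‖ := h
      linarith
    · rw [heval]
      have := norm_add_le (w ^ dm k) e
      rw [norm_pow] at this
      linarith
  -- main induction with strengthened invariant
  have main : ∀ n, m ≤ n →
      ((∑ i ∈ Finset.Icc (m + 1) n, D i n) + 1 ≤ D m n) ∧
      (1 / 2 : ℝ) ^ (∑ i ∈ Finset.Icc (m + 1) n, D i n) * R ^ D m n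
        ≤ ‖Q m n z‖ ∧
      ‖Q m n z‖
        ≤ (3 / 2 : ℝ) ^ (∑ i ∈ Finset.Icc (m + 1) n, D i n) * R ^ D m n := by
    intro n hn
    induction n, hn using Nat.le_induction with
    | base =>
        have hI : Finset.Icc (m + 1) m = ∅ := Finset.Icc_eq_empty (by omega)
        have hD1 : D m m = 1 := by rw [hD, hI]; simp
        rw [hI, hD1]
        simp [hQ0, hz]
    | succ n hn ih =>
        obtain ⟨hSD, hlow, hhigh⟩ := ih
        set S := ∑ i ∈ Finset.Icc (m + 1) n, D i n with hSdef
        set w := Q m n z with hwdef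
        have hd2 := (hdm (n + 1)).1
        -- recursion identities
        have hDrec : D m (n + 1) = D m n * dm (n + 1) := by
          rw [hD, hD, Finset.prod_Icc_succ_top (Nat.succ_le_succ hn)]
        have hSrec : (∑ i ∈ Finset.Icc (m + 1) (n + 1), D i (n + 1))
            = 1 + S * dm (n + 1) := by
          rw [Finset.sum_Icc_succ_top (Nat.succ_le_succ hn)]
          have hDnn : D (n + 1) (n + 1) = 1 := by
            rw [hD]; simp
          have hc : ∀ i ∈ Finset.Icc (m + 1) n, D i (n + 1) = D i n * dm (n + 1) := by
            intro i hi
            have hi2 := (Finset.mem_Icc.mp hi).2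
            rw [hD, hD, Finset.prod_Icc_succ_top (Nat.succ_le_succ hi2)]
          rw [Finset.sum_congr rfl hc, ← Finset.sum_mul, hDnn, hSdef]
          ring
        -- |w| ≥ R ≥ R₀
        have hpowpos : (0 : ℝ) < (1 / 2 : ℝ) ^ S := by positivity
        have hwR : R ≤ (1 / 2 : ℝ) ^ S * R ^ D m n := by
          have h1 : R ^ (S + 1) ≤ R ^ D m n :=
            pow_le_pow_right₀ (by linarith) hSD
          have h2 : (2 : ℝ) ^ S * R ≤ R ^ (S + 1) := by
            rw [pow_succ]
            exact mul_le_mul_of_nonneg_right (pow_le_pow_left₀ (by norm_num) h2R S)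
              hR0.le
          have h3 : ((1 : ℝ) / 2) ^ S * (2 : ℝ) ^ S = 1 := by
            rw [← mul_pow]; norm_num
          calc R = (1 / 2 : ℝ) ^ S * ((2 : ℝ) ^ S * R) := by
                rw [← mul_assoc, h3, one_mul]
            _ ≤ (1 / 2 : ℝ) ^ S * R ^ (S + 1) := by
                exact mul_le_mul_of_nonneg_left h2 hpowpos.le
            _ ≤ (1 / 2 : ℝ) ^ S * R ^ D m n := mul_le_mul_of_nonneg_left h1 hpowpos.le
        have hwR₀ : R₀ ≤ ‖w‖ := le_trans hR (le_trans hwR hlow)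
        obtain ⟨hk1, hk2⟩ := key (n + 1) w hwR₀
        have hQeval : Q m (n + 1) z = (P (n + 1)).eval w := hQs m n z
        have hwpos : (0 : ℝ) < ‖w‖ := lt_of_lt_of_le hR₀ hwR₀
        constructor
        · -- numeric: S' + 1 ≤ D'
          rw [hSrec, hDrec]
          have h1 : S + 1 ≤ D m n := hSD
          have h2 : 2 ≤ dm (n + 1) := hd2
          calc 1 + S * dm (n + 1) + 1 ≤ (S + 1) * dm (n + 1) := by nlinarith
            _ ≤ D m n * dm (n + 1) := Nat.mul_le_mul_right _ hSD
        constructor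
        · -- lower bound
          rw [hQeval, hSrec, hDrec]
          have hstep : ((1 / 2 : ℝ) ^ S * R ^ D m n) ^ dm (n + 1)
              ≤ ‖w‖ ^ dm (n + 1) :=
            pow_le_pow_left₀ (by positivity) hlow _
          calc (1 / 2 : ℝ) ^ (1 + S * dm (n + 1)) * R ^ (D m n * dm (n + 1))
              = (1 / 2 : ℝ) * ((1 / 2 : ℝ) ^ S * R ^ D m n) ^ dm (n + 1) := by
                rw [mul_pow, ← pow_mul, ← pow_mul, pow_add, pow_one]
                ring
            _ ≤ (1 / 2 : ℝ) * ‖w‖ ^ dm (n + 1) := by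
                exact mul_le_mul_of_nonneg_left hstep (by norm_num)
            _ ≤ ‖(P (n + 1)).eval w‖ := hk1
        · -- upper bound
          rw [hQeval, hSrec, hDrec]
          have hstep : ‖w‖ ^ dm (n + 1)
              ≤ ((3 / 2 : ℝ) ^ S * R ^ D m n) ^ dm (n + 1) :=
            pow_le_pow_left₀ hwpos.le hhigh _
          calc ‖(P (n + 1)).eval w‖
              ≤ (3 / 2 : ℝ) * ‖w‖ ^ dm (n + 1) := hk2
            _ ≤ (3 / 2 : ℝ) * ((3 / 2 : ℝ) ^ S * R ^ D m n) ^ dm (n + 1) := by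
                exact mul_le_mul_of_nonneg_left hstep (by norm_num)
            _ = (3 / 2 : ℝ) ^ (1 + S * dm (n + 1)) * R ^ (D m n * dm (n + 1)) := by
                rw [mul_pow, ← pow_mul, ← pow_mul, pow_add, pow_one]
                ring
  obtain ⟨hSD, hlow, hhigh⟩ := main n hmn
  have hRD : (0 : ℝ) ≤ R ^ D m n := by positivity
  constructor
  · calc (1 / 2 : ℝ) ^ (1 + ∑ i ∈ Finset.Icc (m + 1) n, D i n) * R ^ D m n
        ≤ (1 / 2 : ℝ) ^ (∑ i ∈ Finset.Icc (m + 1) n, D i n) * R ^ D m n := by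
          apply mul_le_mul_of_nonneg_right _ hRD
          apply pow_le_pow_of_le_one (by norm_num) (by norm_num)
          omega
      _ ≤ ‖Q m n z‖ := hlow
  · calc ‖Q m n z‖
        ≤ (3 / 2 : ℝ) ^ (∑ i ∈ Finset.Icc (m + 1) n, D i n) * R ^ D m n := hhigh
      _ ≤ (3 / 2 : ℝ) ^ (1 + ∑ i ∈ Finset.Icc (m + 1) n, D i n) * R ^ D m n := by
          apply mul_le_mul_of_nonneg_right _ hRD
          apply pow_le_pow_right₀ (by norm_num)
          omega
end

section
/- Let {P_m} be a bounded polynomial sequence (degrees d_m ∈ [2,d], leading coefficients with moduli in [1/K,K], other coefficients bounded by M). Then there exist constants A ≥ 1 and a sequence of linear maps χ_m(z) = α_m z with 1/A ≤ |α_m| ≤ A such that the conjugated sequence ˜P_m = χ_m ∘ P_m ∘ χ_{m-1}^{-1} consists of monic polynomials, and the ˜P_m form a bounded sequence. -/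
open Polynomial

lemma coeff_comp_C_mul_X' (p : Polynomial ℂ) (c : ℂ) (n : ℕ) :
    (p.comp (C c * X)).coeff n = p.coeff n * c ^ n := by
  rw [comp_eq_sum_left, Polynomial.coeff_sum, Polynomial.sum_def]
  have h : ∀ e ∈ p.support, (C (p.coeff e) * (C c * X) ^ e).coeff n
      = if e = n then p.coeff e * c ^ e else 0 := by
    intro e _
    rw [mul_pow, ← C_pow, ← mul_assoc, ← C_mul, coeff_C_mul, coeff_X_pow, mul_ite, mul_one,
      mul_zero]
    simp [eq_comm]
  rw [Finset.sum_congr rfl h, Finset.sum_ite_eq' p.support n (fun e => p.coeff e * c ^ e)]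
  by_cases hn : n ∈ p.support
  · simp [hn]
  · simp [hn, Polynomial.notMem_support_iff.1 hn]

/-- any bounded polynomial sequence is conjugate, via linear maps
`χ_m(z) = α_m z` with uniformly bounded coefficients, to a bounded monic sequence. -/
theorem conjugate_to_monic (d : ℕ) (K M : ℝ) (hd : 2 ≤ d) (hK : 1 ≤ K) (hM : 0 ≤ M)
    (P : ℕ → Polynomial ℂ) (dm : ℕ → ℕ)
    (hdeg : ∀ m, (P m).natDegree = dm m)
    (hdm : ∀ m, 2 ≤ dm m ∧ dm m ≤ d)
    (hlead : ∀ m, 1 / K ≤ ‖(P m).leadingCoeff‖ ∧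
      ‖(P m).leadingCoeff‖ ≤ K)
    (hcoeff : ∀ m, ∀ n < dm m, ‖(P m).coeff n‖ ≤ M) :
    ∃ (A : ℝ) (α : ℕ → ℂ) (Pt : ℕ → Polynomial ℂ) (M' : ℝ),
      1 ≤ A ∧ 0 ≤ M' ∧
      (∀ m, 1 / A ≤ ‖α m‖ ∧ ‖α m‖ ≤ A) ∧
      (∀ m, 1 ≤ m → ∀ z : ℂ,
        (Pt m).eval z = α m * (P m).eval (z / α (m - 1))) ∧
      (∀ m, (Pt m).Monic) ∧
      (∀ m, (Pt m).natDegree = dm m) ∧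
      (∀ m, ∀ n < dm m, ‖(Pt m).coeff n‖ ≤ M') := by
  have hK0 : (0:ℝ) < K := lt_of_lt_of_le one_pos hK
  set a : ℕ → ℂ := fun n => (P n).leadingCoeff with ha_def
  have ha0 : ∀ n, a n ≠ 0 := by
    intro n h0
    have h := (hlead n).1
    rw [show (P n).leadingCoeff = a n from rfl, h0] at h
    simp at h
    nlinarith [one_div_pos.2 hK0]
  set b : ℕ → ℂ := fun n => Complex.log (a n) with hb_def
  set B : ℝ := Real.log K + Real.pi with hB_def
  have hB0 : 0 ≤ B := add_nonneg (Real.log_nonneg hK) Real.pi_pos.le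
  have hb : ∀ n, ‖b n‖ ≤ B := by
    intro n
    calc ‖b n‖ ≤ |(b n).re| + |(b n).im| := Complex.norm_le_abs_re_add_abs_im _
    _ ≤ Real.log K + Real.pi := by
        apply add_le_add
        · rw [hb_def]
          simp only [Complex.log_re]
          rw [abs_le]
          constructor
          · have h1 := Real.log_le_log (one_div_pos.2 hK0) (hlead n).1
            rw [Real.log_div one_ne_zero (ne_of_gt hK0), Real.log_one, zero_sub] at h1
            linarith
          · exact Real.log_le_log (norm_pos_iff.2 (ha0 n)) (hlead n).2
        · rw [hb_def]
          simp only [Complex.log_im]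
          exact Complex.abs_arg_le_pi _
  set Dp : ℕ → ℕ → ℂ := fun m k => ∏ j ∈ Finset.range (k+1), ((dm (m+1+j) : ℂ)) with hDp_def
  have hDp_abs : ∀ m k, (2:ℝ)^(k+1) ≤ ‖Dp m k‖ := by
    intro m k
    rw [hDp_def]
    simp only [norm_prod]
    calc (2:ℝ)^(k+1) = ∏ j ∈ Finset.range (k+1), (2:ℝ) := by
          rw [Finset.prod_const, Finset.card_range]
    _ ≤ ∏ j ∈ Finset.range (k+1), ‖(dm (m+1+j):ℂ)‖ := by
          apply Finset.prod_le_prod (fun _ _ => by norm_num)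
          intro j _
          rw [Complex.norm_natCast]
          exact_mod_cast (hdm (m+1+j)).1
  have hDp_ne : ∀ m k, Dp m k ≠ 0 := by
    intro m k h0
    have := hDp_abs m k
    rw [h0, norm_zero] at this
    nlinarith [pow_pos (by norm_num : (0:ℝ) < 2) (k+1)]
  set f : ℕ → ℕ → ℂ := fun m k => b (m+1+k) / Dp m k with hf_def
  have hf_bound : ∀ m k, ‖f m k‖ ≤ B * (1/2)^(k+1) := by
    intro m k
    rw [hf_def]
    simp only [norm_div]
    rw [show B * (1/2:ℝ)^(k+1) = B / 2^(k+1) by rw [div_pow, one_pow]; ring]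
    exact div_le_div₀ hB0 (hb _) (by positivity) (hDp_abs m k)
  have hgeo : Summable (fun k : ℕ => B * (1/2:ℝ)^(k+1)) := by
    have := (summable_geometric_of_lt_one (by norm_num : (0:ℝ) ≤ 1/2) (by norm_num)).mul_left
      (B * (1/2))
    refine this.congr (fun k => ?_)
    ring
  have hsum : ∀ m, Summable (f m) := by
    intro m
    apply Summable.of_norm
    exact Summable.of_nonneg_of_le (fun k => norm_nonneg _)
      (fun k => by exact hf_bound m k) hgeo
  set S : ℕ → ℂ := fun m => ∑' k, f m k with hS_def
  have hS : ∀ m, ‖S m‖ ≤ B := by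
    intro m
    have hn : Summable (fun k => ‖f m k‖) := by
      exact Summable.of_nonneg_of_le (fun k => norm_nonneg _)
        (fun k => by exact hf_bound m k) hgeo
    have hval : ∑' k:ℕ, B*(1/2:ℝ)^(k+1) = B := by
      have h2 : ∑' k:ℕ, ((1:ℝ)/2)^k = 2 := by
        rw [tsum_geometric_of_lt_one (by norm_num) (by norm_num)]; norm_num
      calc ∑' k:ℕ, B*(1/2:ℝ)^(k+1) = ∑' k:ℕ, (B*(1/2)) * (1/2:ℝ)^k := by
            congr 1; funext k; ring
      _ = (B*(1/2)) * ∑' k:ℕ, (1/2:ℝ)^k := tsum_mul_left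
      _ = B := by rw [h2]; ring
    calc ‖S m‖ = ‖∑' k, f m k‖ := rfl
    _ ≤ ∑' k, ‖f m k‖ := norm_tsum_le_tsum_norm hn
    _ ≤ ∑' k:ℕ, B*(1/2:ℝ)^(k+1) := by
        apply Summable.tsum_le_tsum _ hn hgeo
        intro k
        exact hf_bound m k
    _ = B := hval
  set α : ℕ → ℂ := fun m => Complex.exp (S m) with hα_def
  have hα_ne : ∀ m, α m ≠ 0 := fun m => Complex.exp_ne_zero _
  set A : ℝ := Real.exp B with hA_def
  have hA1 : 1 ≤ A := Real.one_le_exp hB0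
  have hαb : ∀ m, 1/A ≤ ‖α m‖ ∧ ‖α m‖ ≤ A := by
    intro m
    have h1 : |(S m).re| ≤ B := (Complex.abs_re_le_norm _).trans (hS m)
    rw [abs_le] at h1
    have habs : ‖α m‖ = Real.exp ((S m).re) := Complex.norm_exp _
    constructor
    · rw [habs, hA_def, show (1:ℝ)/Real.exp B = Real.exp (-B) by
        rw [Real.exp_neg, one_div]]
      exact Real.exp_le_exp.2 h1.1
    · rw [habs, hA_def]
      exact Real.exp_le_exp.2 h1.2
  have hkey : ∀ m, α m ^ (dm (m+1)) = a (m+1) * α (m+1) := by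
    intro m
    have he2 : 2 ≤ dm (m+1) := (hdm (m+1)).1
    have he0 : ((dm (m+1) : ℂ)) ≠ 0 := by
      exact_mod_cast (by omega : dm (m+1) ≠ 0)
    have h1 : ((dm (m+1):ℂ)) * S m = b (m+1) + S (m+1) := by
      have hsummul : Summable (fun k => ((dm (m+1):ℂ)) * f m k) := (hsum m).mul_left _
      rw [hS_def]
      simp only
      rw [← tsum_mul_left, Summable.tsum_eq_zero_add hsummul]
      congr 1
      · rw [hf_def]
        simp only
        rw [show Dp m 0 = ((dm (m+1):ℂ)) from by
          rw [hDp_def]; simp]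
        field_simp
      · apply tsum_congr
        intro k
        have hD : Dp m (k+1) = ((dm (m+1):ℂ)) * Dp (m+1) k := by
          rw [hDp_def]
          simp only
          rw [Finset.prod_range_succ', mul_comm]
          congr 1
          apply Finset.prod_congr rfl
          intro j _
          congr 2
          omega
        rw [hf_def]
        simp only
        rw [hD, show m+1+(k+1) = (m+1)+1+k from by omega]
        have hne := hDp_ne (m+1) k
        field_simp
    calc α m ^ (dm (m+1)) = Complex.exp (((dm (m+1):ℂ)) * S m) := by
          rw [hα_def]; simp only; rw [← Complex.exp_nat_mul]
    _ = Complex.exp (b (m+1)) * Complex.exp (S (m+1)) := by rw [h1, Complex.exp_add]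
    _ = a (m+1) * α (m+1) := by
          rw [hb_def]; simp only; rw [Complex.exp_log (ha0 (m+1))]
  have hkey' : ∀ m, 1 ≤ m → α (m-1) ^ (dm m) = a m * α m := by
    intro m hm
    obtain ⟨k, rfl⟩ : ∃ k, m = k + 1 := ⟨m - 1, by omega⟩
    simpa using hkey k
  set Pt : ℕ → Polynomial ℂ := fun m =>
    if m = 0 then X ^ dm 0 else C (α m) * (P m).comp (C (α (m-1))⁻¹ * X) with hPt_def
  have hP0 : ∀ m, P m ≠ 0 := by
    intro m h
    have h1 := hdeg m
    rw [h, natDegree_zero] at h1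
    have := (hdm m).1
    omega
  have hqdeg : ∀ m, (C (α (m-1))⁻¹ * X : Polynomial ℂ).natDegree = 1 := by
    intro m
    rw [natDegree_C_mul (inv_ne_zero (hα_ne (m-1))), natDegree_X]
  refine ⟨A, α, Pt, A^(d+1) * M, hA1, by positivity, hαb, ?_, ?_, ?_, ?_⟩
  · -- eval identity
    intro m hm z
    rw [hPt_def]
    simp only [if_neg (by omega : m ≠ 0)]
    rw [eval_mul, eval_C, eval_comp, eval_mul, eval_C, eval_X, div_eq_mul_inv, mul_comm z]
  · -- monic
    intro m
    rcases Nat.eq_zero_or_pos m with h0 | hpos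
    · subst h0
      rw [hPt_def]
      simp only [if_pos rfl]
      exact monic_X_pow _
    · rw [hPt_def]
      simp only [if_neg (by omega : m ≠ 0)]
      rw [Monic, leadingCoeff_mul, leadingCoeff_C,
        leadingCoeff_comp (by rw [hqdeg m]; norm_num), hdeg m]
      rw [show (C (α (m-1))⁻¹ * X : Polynomial ℂ).leadingCoeff = (α (m-1))⁻¹ by
        rw [leadingCoeff_mul, leadingCoeff_C, leadingCoeff_X, mul_one]]
      rw [inv_pow, hkey' m hpos]
      rw [show (P m).leadingCoeff = a m from rfl]
      field_simp [ha0 m, hα_ne m]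
  · -- degree
    intro m
    rcases Nat.eq_zero_or_pos m with h0 | hpos
    · subst h0
      rw [hPt_def]
      simp only [if_pos rfl]
      exact natDegree_X_pow _
    · rw [hPt_def]
      simp only [if_neg (by omega : m ≠ 0)]
      rw [natDegree_C_mul (hα_ne m), natDegree_comp, hqdeg m, hdeg m, mul_one]
  · -- coefficient bounds
    intro m n hn
    rcases Nat.eq_zero_or_pos m with h0 | hpos
    · subst h0
      rw [show Pt 0 = X ^ dm 0 from by rw [hPt_def]; simp, coeff_X_pow,
        if_neg (by omega : n ≠ dm 0), norm_zero]
      exact mul_nonneg (by positivity) hM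
    · rw [hPt_def]
      simp only [if_neg (by omega : m ≠ 0)]
      rw [coeff_C_mul, coeff_comp_C_mul_X', norm_mul, norm_mul, norm_pow, norm_inv]
      have hA0 : (0:ℝ) < A := lt_of_lt_of_le one_pos hA1
      have h2 : (‖α (m-1)‖)⁻¹ ≤ A := by
        have := (hαb (m-1)).1
        rw [one_div] at this
        calc (‖α (m-1)‖)⁻¹ ≤ (A⁻¹)⁻¹ :=
              inv_anti₀ (by positivity) this
        _ = A := inv_inv A
      have h3 : ‖(P m).coeff n‖ ≤ M := hcoeff m n hn
      have hnd : n ≤ d := by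
        have := (hdm m).2
        omega
      calc ‖α m‖ * (‖(P m).coeff n‖ * (‖α (m-1)‖)⁻¹ ^ n)
          ≤ A * (M * A ^ n) := by
            have h1 : ‖α m‖ ≤ A := (hαb m).2
            gcongr
      _ ≤ A * (M * A ^ d) := by
            gcongr
      _ = A^(d+1) * M := by ring
end

section
/- Let {P_m} be a bounded polynomial sequence with iterated Fatou sets F_m and iterated Julia sets J_m. Then for all 0 ≤ m ≤ n, Q_{m,n}(F_m) = F_n and Q_{m,n}(J_m) = J_n. -/
open Filter Polynomial Set

lemma poly_eval_surjective (p : Polynomial ℂ) (hp : 0 < p.natDegree) :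
    Function.Surjective (fun z => p.eval z) := by
  intro w
  have hdeg : (p - C w).natDegree = p.natDegree := natDegree_sub_C
  have hne : (p - C w).degree ≠ 0 := by
    have : 0 < (p - C w).natDegree := hdeg ▸ hp
    have := natDegree_pos_iff_degree_pos.mp this
    exact ne_of_gt this
  obtain ⟨z, hz⟩ := Complex.isAlgClosed.exists_root _ hne
  refine ⟨z, ?_⟩
  have : (p - C w).eval z = 0 := hz
  simp only [eval_sub, eval_C, sub_eq_zero] at this
  exact this

lemma poly_eval_isOpenMap (p : Polynomial ℂ) (hp : 0 < p.natDegree) :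
    IsOpenMap (fun z => p.eval z) := by
  have hana : AnalyticOnNhd ℂ (fun z => p.eval z) Set.univ :=
    (p.differentiable.differentiableOn).analyticOnNhd isOpen_univ
  rcases hana.is_constant_or_isOpen isPreconnected_univ with h | h
  · exfalso
    obtain ⟨w, hw⟩ := h
    have hsurj := poly_eval_surjective p hp
    obtain ⟨z0, hz0⟩ := hsurj (w + 1)
    have := hw z0 (mem_univ _)
    simp only at hz0 this
    rw [hz0] at this
    exact (by norm_num : (1 : ℂ) ≠ 0) (by linear_combination this)
  · intro s hs
    have := h s (subset_univ s) hs
    simpa using this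

/-- invariance of the iterated Fatou and Julia sets:
`Q_{m,n}(F_m) = F_n` and `Q_{m,n}(J_m) = J_n`. -/
theorem fatou_julia_invariance (d : ℕ) (K M : ℝ) (hd : 2 ≤ d) (hK : 1 ≤ K) (hM : 0 ≤ M)
    (P : ℕ → Polynomial ℂ) (dm : ℕ → ℕ)
    (hdeg : ∀ m, (P m).natDegree = dm m)
    (hdm : ∀ m, 2 ≤ dm m ∧ dm m ≤ d)
    (hlead : ∀ m, 1 / K ≤ ‖(P m).leadingCoeff‖ ∧
      ‖(P m).leadingCoeff‖ ≤ K)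
    (hcoeff : ∀ m, ∀ n < dm m, ‖(P m).coeff n‖ ≤ M)
    (Q : ℕ → ℕ → ℂ → ℂ)
    (hQ0 : ∀ m z, Q m m z = z)
    (hQs : ∀ m n z, Q m (n + 1) z = (P (n + 1)).eval (Q m n z))
    (A Kf J F : ℕ → Set ℂ)
    (hA : ∀ m, A m = {z : ℂ | Tendsto (fun n => ‖Q m n z‖) atTop atTop})
    (hKf : ∀ m, Kf m = {z : ℂ | ∃ C : ℝ, ∀ n, m ≤ n → ‖Q m n z‖ ≤ C})
    (hJ : ∀ m, J m = frontier (Kf m))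
    (hF : ∀ m, F m = interior (Kf m) ∪ A m)
    (m n : ℕ) (hmn : m ≤ n) :
    Q m n '' F m = F n ∧ Q m n '' J m = J n := by
  -- Q m n is given by a polynomial of positive degree
  have hpoly : ∃ p : Polynomial ℂ, 0 < p.natDegree ∧ ∀ z, Q m n z = p.eval z := by
    induction n, hmn using Nat.le_induction with
    | base => exact ⟨X, by simp, fun z => by simp [hQ0]⟩
    | succ k hk ih =>
        obtain ⟨p, hp, hpe⟩ := ih
        refine ⟨(P (k + 1)).comp p, ?_, fun z => ?_⟩
        · rw [natDegree_comp, hdeg]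
          have h2 := (hdm (k + 1)).1
          positivity
        · rw [hQs, hpe, eval_comp]
  obtain ⟨p, hpdeg, hpe⟩ := hpoly
  have hf : Q m n = fun z => p.eval z := funext hpe
  have hsurj : Function.Surjective (Q m n) := hf ▸ poly_eval_surjective p hpdeg
  have hopen : IsOpenMap (Q m n) := hf ▸ poly_eval_isOpenMap p hpdeg
  have hcont : Continuous (Q m n) := hf ▸ p.continuous
  -- semigroup property
  have hsemi : ∀ k, n ≤ k → ∀ z, Q n k (Q m n z) = Q m k z := by
    intro k hk
    induction k, hk using Nat.le_induction with
    | base => intro z; rw [hQ0]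
    | succ j hj ih => intro z; rw [hQs, hQs, ih]
  -- K is a preimage
  have hKfpre : Kf m = Q m n ⁻¹' (Kf n) := by
    ext z
    rw [hKf m, hKf n]
    simp only [mem_setOf_eq, mem_preimage]
    constructor
    · rintro ⟨C, hC⟩
      exact ⟨C, fun k hk => by rw [hsemi k hk]; exact hC k (hmn.trans hk)⟩
    · rintro ⟨C, hC⟩
      refine ⟨max C ((Finset.range (n + 1)).sup' (by simp)
        (fun k => ‖Q m k z‖)), fun k hk => ?_⟩
      rcases le_total k n with h | h
      · exact le_max_of_le_right (Finset.le_sup' (fun k => ‖Q m k z‖)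
          (Finset.mem_range.mpr (Nat.lt_succ_of_le h)))
      · refine le_max_of_le_left ?_
        rw [← hsemi k h]
        exact hC k h
  -- A is a preimage
  have hApre : A m = Q m n ⁻¹' (A n) := by
    ext z
    rw [hA m, hA n]
    simp only [mem_setOf_eq, mem_preimage]
    have hev : (fun k => ‖Q m k z‖) =ᶠ[atTop]
        (fun k => ‖Q n k (Q m n z)‖) :=
      eventually_atTop.mpr ⟨n, fun k hk => by simp only [hsemi k hk]⟩
    exact ⟨fun h => (tendsto_congr' hev).mp h, fun h => (tendsto_congr' hev).mpr h⟩
  -- F and J are preimages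
  have hFpre : F m = Q m n ⁻¹' (F n) := by
    rw [hF m, hF n, preimage_union, hApre, hKfpre,
      hopen.preimage_interior_eq_interior_preimage hcont]
  have hJpre : J m = Q m n ⁻¹' (J n) := by
    rw [hJ m, hJ n, hKfpre, hopen.preimage_frontier_eq_frontier_preimage hcont]
  rw [hFpre, hJpre, image_preimage_eq _ hsurj, image_preimage_eq _ hsurj]
  exact ⟨rfl, rfl⟩
end
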